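/- Let k* = (k_i*)_{i=1}^n be a degree sequence, let x_i* > 0 be positive reals such that p_ij* = x_i* x_j*/(1 + x_i* x_j*) satisfies Σ_{j≠i} p_ij* = k_i* for all i, and let G* be any graph on n vertices whose degree sequence equals k*. Then log P_can(G*) = −H(p*), where H(p*) = −Σ_{1≤i<j≤n} [p_ij* log p_ij* + (1−p_ij*) log(1−p_ij*)] is the entropy of the edge probabilities; equivalently, log Π_{1≤i<j≤n} (p_ij*)^{g_ij(G*)}(1−p_ij*)^{1−g_ij(G*)} = Σ_{1≤i<j≤n} [p_ij* log p_ij* + (1−p_ij*) log(1−p_ij*)]. -/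

import Mathlib

open Filter Finset Asymptotics

/-- A simple undirected graph on `n` labelled vertices, given by its adjacency
indicators `g i j ∈ {0,1}` (as `Bool`), symmetric and with no loops. -/
abbrev BoolGraph (n : ℕ) : Type :=
  {g : Fin n → Fin n → Bool // (∀ i j, g i j = g j i) ∧ ∀ i, g i i = false}

noncomputable section

/-- The degree `k_i(G) = Σ_{j ≠ i} g_ij(G)` of vertex `i` in the graph `G`. -/
def degSeq {n : ℕ} (G : BoolGraph n) (i : Fin n) : ℕ :=
  ∑ j ∈ Finset.univ.filter (fun j => j ≠ i), if G.1 i j then 1 else 0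

/-- Canonical connection probabilities `p*_ij = x_i x_j / (1 + x_i x_j)`. -/
def pStar {n : ℕ} (x : Fin n → ℝ) (i j : Fin n) : ℝ := x i * x j / (1 + x i * x j)

/-- The parameters `x` realise the degree sequence `k` as canonical averages:
`Σ_{j ≠ i} p*_ij = k_i` for all `i`. -/
def fitsDegrees {n : ℕ} (x : Fin n → ℝ) (k : Fin n → ℕ) : Prop :=
  ∀ i, ∑ j ∈ Finset.univ.filter (fun j => j ≠ i), pStar x i j = (k i : ℝ)

/-- Canonical ensemble probability
`P_can(G) = Π_{i<j} p_ij^{g_ij(G)} (1-p_ij)^{1-g_ij(G)}`. -/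
def Pcan {n : ℕ} (p : Fin n → Fin n → ℝ) (G : BoolGraph n) : ℝ :=
  ∏ ij ∈ Finset.univ.filter (fun ij : Fin n × Fin n => ij.1 < ij.2),
    if G.1 ij.1 ij.2 then p ij.1 ij.2 else 1 - p ij.1 ij.2

/-- `Ω_k`: the number of graphs with degree sequence `k`. -/
def numGraphs (n : ℕ) (k : Fin n → ℕ) : ℕ :=
  (Finset.univ.filter (fun G : BoolGraph n => degSeq G = k)).card

/-- Microcanonical ensemble: uniform on the graphs with degree sequence `k`. -/
def Pmic {n : ℕ} (k : Fin n → ℕ) (G : BoolGraph n) : ℝ :=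
  if degSeq G = k then ((numGraphs n k : ℝ))⁻¹ else 0

/-- Relative entropy `S_n(P_mic | P_can) = Σ_G P_mic(G) log (P_mic(G)/P_can(G))`. -/
def relEnt (n : ℕ) (k : Fin n → ℕ) (p : Fin n → Fin n → ℝ) : ℝ :=
  ∑ G : BoolGraph n, Pmic k G * Real.log (Pmic k G / Pcan p G)

/-- `f̄_n = (1/(2n)) Σ_{i=1}^n log (k_i (n-1-k_i) / n)`. -/
def fbar (n : ℕ) (k : Fin n → ℕ) : ℝ :=
  (1 / (2 * (n : ℝ))) * ∑ i, Real.log ((k i : ℝ) * ((n : ℝ) - 1 - (k i : ℝ)) / (n : ℝ))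

/-- The canonical covariance matrix `Q` of the degrees:
`q_ij = p_ij (1 - p_ij)` for `i ≠ j` and `q_ii = Σ_{l ≠ i} p_il (1 - p_il)`. -/
def Qmat {n : ℕ} (p : Fin n → Fin n → ℝ) : Matrix (Fin n) (Fin n) ℝ :=
  Matrix.of fun i j =>
    if i = j then ∑ l ∈ Finset.univ.filter (fun l => l ≠ i), p i l * (1 - p i l)
    else p i j * (1 - p i j)

/-- δ-tameness: `δ ≤ p_ij ≤ 1 - δ` for all `i ≠ j`. -/
def deltaTame {n : ℕ} (δ : ℝ) (p : Fin n → Fin n → ℝ) : Prop :=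
  ∀ i j : Fin n, i ≠ j → δ ≤ p i j ∧ p i j ≤ 1 - δ

/-- If `G*` realises the degree sequence `k*`, then
`log P_can(G*) = -H(p*)`, i.e.
`log P_can(G*) = Σ_{i<j} [p_ij log p_ij + (1-p_ij) log(1-p_ij)]`. -/
theorem log_Pcan_eq_neg_entropy
    (n : ℕ) (k : Fin n → ℕ) (x : Fin n → ℝ)
    (hxpos : ∀ i, 0 < x i)
    (hfit : fitsDegrees x k)
    (G : BoolGraph n) (hG : degSeq G = k) :
    Real.log (Pcan (pStar x) G) =
      ∑ ij ∈ Finset.univ.filter (fun ij : Fin n × Fin n => ij.1 < ij.2),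
        (pStar x ij.1 ij.2 * Real.log (pStar x ij.1 ij.2) +
          (1 - pStar x ij.1 ij.2) * Real.log (1 - pStar x ij.1 ij.2)) := by
  classical
  have hxy : ∀ i j : Fin n, 0 < x i * x j := fun i j => mul_pos (hxpos i) (hxpos j)
  have hpos : ∀ i j, 0 < pStar x i j := fun i j =>
    div_pos (hxy i j) (by linarith [hxy i j])
  have hlt1 : ∀ i j, pStar x i j < 1 := fun i j => by
    rw [pStar, div_lt_one (by linarith [hxy i j])]; linarith [hxy i j]
  set χ : Fin n → Fin n → ℝ := fun i j => if G.1 i j then 1 else 0 with hχ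
  have hlog : ∀ i j : Fin n,
      Real.log (pStar x i j) - Real.log (1 - pStar x i j) =
        Real.log (x i) + Real.log (x j) := by
    intro i j
    have h1 : (0:ℝ) < 1 - pStar x i j := by linarith [hlt1 i j]
    have hd : pStar x i j / (1 - pStar x i j) = x i * x j := by
      rw [pStar]
      have h0 : (0:ℝ) < 1 + x i * x j := by linarith [hxy i j]
      field_simp
      ring
    rw [← Real.log_div (ne_of_gt (hpos i j)) (ne_of_gt h1), hd,
      Real.log_mul (ne_of_gt (hxpos i)) (ne_of_gt (hxpos j))]
  rw [Pcan, Real.log_prod]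
  swap
  · intro ij _
    split
    · exact ne_of_gt (hpos _ _)
    · have := hlt1 ij.1 ij.2; exact ne_of_gt (by linarith)
  rw [← sub_eq_zero, ← Finset.sum_sub_distrib]
  simp only [apply_ite Real.log]
  have hterm : ∀ ij : Fin n × Fin n,
      ((if G.1 ij.1 ij.2 then Real.log (pStar x ij.1 ij.2)
          else Real.log (1 - pStar x ij.1 ij.2)) -
        (pStar x ij.1 ij.2 * Real.log (pStar x ij.1 ij.2) +
          (1 - pStar x ij.1 ij.2) * Real.log (1 - pStar x ij.1 ij.2))) =
      (χ ij.1 ij.2 - pStar x ij.1 ij.2) *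
        (Real.log (x ij.1) + Real.log (x ij.2)) := by
    intro ij
    rw [← hlog ij.1 ij.2, hχ]
    by_cases h : G.1 ij.1 ij.2 = true
    · simp only [h, if_true]; ring
    · simp only [h, if_false, Bool.false_eq_true]; ring
  calc (∑ ij ∈ Finset.univ.filter (fun ij : Fin n × Fin n => ij.1 < ij.2),
        ((if G.1 ij.1 ij.2 then Real.log (pStar x ij.1 ij.2)
            else Real.log (1 - pStar x ij.1 ij.2)) -
          (pStar x ij.1 ij.2 * Real.log (pStar x ij.1 ij.2) +
            (1 - pStar x ij.1 ij.2) * Real.log (1 - pStar x ij.1 ij.2))))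
      = ∑ ij ∈ Finset.univ.filter (fun ij : Fin n × Fin n => ij.1 < ij.2),
          (χ ij.1 ij.2 - pStar x ij.1 ij.2) *
            (Real.log (x ij.1) + Real.log (x ij.2)) := by
        exact Finset.sum_congr rfl fun ij _ => hterm ij
    _ = ∑ ij ∈ Finset.univ.filter (fun ij : Fin n × Fin n => ij.1 ≠ ij.2),
          (χ ij.1 ij.2 - pStar x ij.1 ij.2) * Real.log (x ij.1) := by
        have hsym : ∀ i j : Fin n, χ j i - pStar x j i = χ i j - pStar x i j := by
          intro i j
          simp only [hχ, G.2.1 j i, pStar, mul_comm (x j) (x i)]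
        have e1 : (Finset.univ.filter (fun ij : Fin n × Fin n => ij.1 ≠ ij.2)).filter
            (fun ij => ij.1 < ij.2)
            = Finset.univ.filter (fun ij : Fin n × Fin n => ij.1 < ij.2) := by
          ext ij
          simp only [Finset.filter_filter, Finset.mem_filter, Finset.mem_univ, true_and]
          exact ⟨fun h => h.2, fun h => ⟨ne_of_lt h, h⟩⟩
        have e2 : (Finset.univ.filter (fun ij : Fin n × Fin n => ij.1 ≠ ij.2)).filter
            (fun ij => ¬ ij.1 < ij.2)
            = Finset.univ.filter (fun ij : Fin n × Fin n => ij.2 < ij.1) := by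
          ext ij
          simp only [Finset.filter_filter, Finset.mem_filter, Finset.mem_univ, true_and]
          constructor
          · rintro ⟨h1, h2⟩; exact lt_of_le_of_ne (le_of_not_gt h2) h1.symm
          · intro h; exact ⟨(ne_of_lt h).symm, asymm h⟩
        rw [← Finset.sum_filter_add_sum_filter_not
            (Finset.univ.filter (fun ij : Fin n × Fin n => ij.1 ≠ ij.2))
            (fun ij => ij.1 < ij.2), e1, e2]
        simp only [mul_add]
        rw [Finset.sum_add_distrib]
        congr 1
        refine Finset.sum_nbij' (fun ij : Fin n × Fin n => (ij.2, ij.1))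
          (fun ij : Fin n × Fin n => (ij.2, ij.1)) ?_ ?_ ?_ ?_ ?_
        · intro ij hij
          simp only [Finset.mem_filter, Finset.mem_univ, true_and] at hij ⊢
          exact hij
        · intro ij hij
          simp only [Finset.mem_filter, Finset.mem_univ, true_and] at hij ⊢
          exact hij
        · intro ij _; rfl
        · intro ij _; rfl
        · intro ij _
          simp only [hsym]
    _ = 0 := by
        rw [Finset.sum_filter, Fintype.sum_prod_type]
        refine Finset.sum_eq_zero fun i _ => ?_
        have h1 : (∑ j, if (i, j).1 ≠ (i, j).2 then
              (χ i j - pStar x i j) * Real.log (x i) else 0)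
            = (∑ j ∈ Finset.univ.filter (fun j => j ≠ i),
                (χ i j - pStar x i j)) * Real.log (x i) := by
          rw [Finset.sum_mul, Finset.sum_filter]
          refine Finset.sum_congr rfl fun j _ => ?_
          by_cases h : j = i
          · simp [h]
          · simp [h, Ne.symm h]
        rw [h1]
        have hχsum : ∑ j ∈ Finset.univ.filter (fun j => j ≠ i), χ i j
            = (degSeq G i : ℝ) := by
          rw [degSeq]
          push_cast
          refine Finset.sum_congr rfl fun j _ => ?_
          by_cases h : G.1 i j <;> simp [hχ, h]
        have h2 : ∑ j ∈ Finset.univ.filter (fun j => j ≠ i),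
            (χ i j - pStar x i j) = 0 := by
          rw [Finset.sum_sub_distrib, hfit i, hχsum, hG, sub_self]
        rw [h2, zero_mul]
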